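/- Let D be a unital C*-algebra, γ a *-automorphism of D, and M_γ = {a ∈ C([0,1], D) : a(1) = γ(a(0))}. Let h : S¹ → S¹ be an orientation-preserving homeomorphism, and let t₀ ∈ (0, 1], s₀ ∈ [0, 1) and strictly increasing continuous bijections k₀ : [0, t₀] → [s₀, 1], k₁ : [t₀, 1] → [0, s₀] satisfy k₀(t₀) = 1, k₁(t₀) = 0, k₀(0) = k₁(1) = s₀, h(e^{2πit}) = e^{2πik₀(t)} for t ∈ [0, t₀] and h(e^{2πit}) = e^{2πik₁(t)} for t ∈ [t₀, 1]. Then the formula α(a)(t) = a(k₁⁻¹(t)) for t ∈ [0, s₀] and α(a)(t) = γ(a(k₀⁻¹(t))) for t ∈ [s₀, 1] defines a *-automorphism α of M_γ (in particular α(a) is a well-defined element of M_γ for each a ∈ M_γ); moreover α lies over h: for every continuous f : S¹ → ℂ and every a ∈ M_γ, α(η(f)·a) = η(f ∘ h⁻¹)·α(a), where η(f)·b denotes the function t ↦ f(e^{2πit}) b(t). -/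
import Mathlib


open Real

/-- The unit interval `[0,1] ⊆ ℝ`. -/
def I01 : Set ℝ := Set.Icc 0 1

lemma zero_mem_I01 : (0 : ℝ) ∈ I01 := by norm_num [I01]

lemma one_mem_I01 : (1 : ℝ) ∈ I01 := by norm_num [I01]

/-- The mapping torus `M_γ = {a ∈ C([0,1], D) : a(1) = γ(a(0))}`, as a subset of
`C([0,1], D)`. -/
def mappingTorusSet {D : Type*} [CStarAlgebra D] (γ : D ≃⋆ₐ[ℂ] D) : Set C(I01, D) :=
  {a | a ⟨1, one_mem_I01⟩ = γ (a ⟨0, zero_mem_I01⟩)}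

/-- The map `[0,1] → S¹`, `t ↦ e^{2πit}`, as a continuous map. -/
noncomputable def expI01 : C(I01, Circle) :=
  Circle.exp.comp ⟨fun t : I01 => 2 * π * (t : ℝ), by fun_prop⟩

/-- The central multiplier action of `C(S¹, ℂ)` on the mapping torus:
`(η(f)·b)(t) = f(e^{2πit}) b(t)`. -/
noncomputable def etaSmul {D : Type*} [CStarAlgebra D]
    (f : C(Circle, ℂ)) (b : C(I01, D)) : C(I01, D) :=
  (f.comp expI01) • b

/-- Inverse homeomorphism of a continuous bijection between compact intervals. -/
noncomputable def invHomeoAux {a b c d : ℝ} (k : ℝ → ℝ)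
    (hcont : ContinuousOn k (Set.Icc a b)) (hbij : Set.BijOn k (Set.Icc a b) (Set.Icc c d)) :
    Set.Icc c d ≃ₜ Set.Icc a b :=
  (Continuous.homeoOfEquivCompactToT2 (f := hbij.equiv k)
    (Continuous.subtype_mk hcont.restrict _)).symm

lemma invHomeoAux_k {a b c d : ℝ} (k : ℝ → ℝ)
    (hcont : ContinuousOn k (Set.Icc a b)) (hbij : Set.BijOn k (Set.Icc a b) (Set.Icc c d))
    (y : Set.Icc c d) : k ((invHomeoAux k hcont hbij y : ℝ)) = y := by
  exact congrArg Subtype.val ((hbij.equiv k).apply_symm_apply y)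

lemma invHomeoAux_apply_k {a b c d : ℝ} (k : ℝ → ℝ)
    (hcont : ContinuousOn k (Set.Icc a b)) (hbij : Set.BijOn k (Set.Icc a b) (Set.Icc c d))
    (x : ℝ) (hx : x ∈ Set.Icc a b) (hkx : k x ∈ Set.Icc c d) :
    invHomeoAux k hcont hbij ⟨k x, hkx⟩ = ⟨x, hx⟩ := by
  show (hbij.equiv k).symm ⟨k x, hkx⟩ = ⟨x, hx⟩
  rw [Equiv.symm_apply_eq]
  exact Subtype.ext rfl

lemma gammaCont {D : Type*} [CStarAlgebra D] (γ : D ≃⋆ₐ[ℂ] D) : Continuous γ :=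
  (NonUnitalStarAlgHom.isometry (γ : D →⋆ₐ[ℂ] D) γ.injective).continuous

theorem mappingTorus_automorphism_over_circle_homeo
    {D : Type*} [CStarAlgebra D] (γ : D ≃⋆ₐ[ℂ] D)
    (h : Circle ≃ₜ Circle)
    (hor : ∃ k : ℝ → ℝ, Continuous k ∧ StrictMono k ∧ (∀ t : ℝ, k (t + 1) = k t + 1) ∧
      ∀ t : ℝ, h (Circle.exp (2 * π * t)) = Circle.exp (2 * π * k t))
    (t₀ s₀ : ℝ) (k₀ k₁ : ℝ → ℝ)
    (ht₀ : t₀ ∈ Set.Ioc (0 : ℝ) 1) (hs₀ : s₀ ∈ Set.Ico (0 : ℝ) 1)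
    (hk₀cont : ContinuousOn k₀ (Set.Icc 0 t₀)) (hk₀mono : StrictMonoOn k₀ (Set.Icc 0 t₀))
    (hk₀bij : Set.BijOn k₀ (Set.Icc 0 t₀) (Set.Icc s₀ 1))
    (hk₁cont : ContinuousOn k₁ (Set.Icc t₀ 1)) (hk₁mono : StrictMonoOn k₁ (Set.Icc t₀ 1))
    (hk₁bij : Set.BijOn k₁ (Set.Icc t₀ 1) (Set.Icc 0 s₀))
    (hk₀t₀ : k₀ t₀ = 1) (hk₁t₀ : k₁ t₀ = 0) (hk₀0 : k₀ 0 = s₀) (hk₁1 : k₁ 1 = s₀)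
    (hlift₀ : ∀ t ∈ Set.Icc (0 : ℝ) t₀,
      h (Circle.exp (2 * π * t)) = Circle.exp (2 * π * k₀ t))
    (hlift₁ : ∀ t ∈ Set.Icc t₀ (1 : ℝ),
      h (Circle.exp (2 * π * t)) = Circle.exp (2 * π * k₁ t)) :
    ∃ α : C(I01, D) → C(I01, D),
      (∀ a ∈ mappingTorusSet γ, α a ∈ mappingTorusSet γ) ∧
      (∀ a ∈ mappingTorusSet γ, ∀ s : ℝ, ∀ (hs : s ∈ Set.Icc t₀ 1)
        (hks : k₁ s ∈ I01) (hs' : s ∈ I01), α a ⟨k₁ s, hks⟩ = a ⟨s, hs'⟩) ∧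
      (∀ a ∈ mappingTorusSet γ, ∀ s : ℝ, ∀ (hs : s ∈ Set.Icc 0 t₀)
        (hks : k₀ s ∈ I01) (hs' : s ∈ I01), α a ⟨k₀ s, hks⟩ = γ (a ⟨s, hs'⟩)) ∧
      Set.BijOn α (mappingTorusSet γ) (mappingTorusSet γ) ∧
      (∀ a ∈ mappingTorusSet γ, ∀ b ∈ mappingTorusSet γ,
        α (a + b) = α a + α b ∧ α (a * b) = α a * α b) ∧
      (∀ a ∈ mappingTorusSet γ, α (star a) = star (α a)) ∧
      (∀ (c : ℂ), ∀ a ∈ mappingTorusSet γ, α (c • a) = c • α a) ∧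
      (∀ f : C(Circle, ℂ), ∀ a ∈ mappingTorusSet γ,
        α (etaSmul f a) = etaSmul (f.comp (h.symm : C(Circle, Circle))) (α a)) := by
  classical
  obtain ⟨ht₀pos, ht₀le⟩ := ht₀
  obtain ⟨hs₀0, hs₀1⟩ := hs₀
  have hsub₁ : Set.Icc t₀ 1 ⊆ I01 := Set.Icc_subset_Icc ht₀pos.le le_rfl
  have hsub₀ : Set.Icc (0:ℝ) t₀ ⊆ I01 := Set.Icc_subset_Icc le_rfl ht₀le
  have hsubA : Set.Icc s₀ (1:ℝ) ⊆ I01 := Set.Icc_subset_Icc hs₀0 le_rfl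
  have hsubB : Set.Icc (0:ℝ) s₀ ⊆ I01 := Set.Icc_subset_Icc le_rfl hs₀1.le
  have hγc : Continuous γ := gammaCont γ
  have hγsc : Continuous γ.symm := gammaCont γ.symm
  -- the two "inverse branch" maps for α
  set e₁ : Set.Icc (0:ℝ) s₀ ≃ₜ Set.Icc t₀ 1 := invHomeoAux k₁ hk₁cont hk₁bij with he₁
  set e₀ : Set.Icc s₀ (1:ℝ) ≃ₜ Set.Icc (0:ℝ) t₀ := invHomeoAux k₀ hk₀cont hk₀bij with he₀
  set ψ₁ : I01 → I01 := fun t =>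
    ⟨(e₁ (Set.projIcc 0 s₀ hs₀0 (t:ℝ)) : ℝ), hsub₁ (e₁ (Set.projIcc 0 s₀ hs₀0 (t:ℝ))).2⟩
    with hψ₁def
  set ψ₀ : I01 → I01 := fun t =>
    ⟨(e₀ (Set.projIcc s₀ 1 hs₀1.le (t:ℝ)) : ℝ), hsub₀ (e₀ (Set.projIcc s₀ 1 hs₀1.le (t:ℝ))).2⟩
    with hψ₀def
  -- the two branch maps for the inverse β
  set φ₀ : I01 → I01 := fun s =>
    ⟨k₀ ((Set.projIcc 0 t₀ ht₀pos.le (s:ℝ) : ℝ)),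
      hsubA (hk₀bij.mapsTo (Set.projIcc 0 t₀ ht₀pos.le (s:ℝ)).2)⟩ with hφ₀def
  set φ₁ : I01 → I01 := fun s =>
    ⟨k₁ ((Set.projIcc t₀ 1 ht₀le (s:ℝ) : ℝ)),
      hsubB (hk₁bij.mapsTo (Set.projIcc t₀ 1 ht₀le (s:ℝ)).2)⟩ with hφ₁def
  -- specs for ψ₁, ψ₀
  have hψ₁spec : ∀ t : I01, (t:ℝ) ≤ s₀ →
      ((ψ₁ t : ℝ) ∈ Set.Icc t₀ 1 ∧ k₁ ((ψ₁ t : ℝ)) = (t:ℝ)) := by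
    intro t ht
    have hm : (t:ℝ) ∈ Set.Icc (0:ℝ) s₀ := ⟨t.2.1, ht⟩
    constructor
    · exact (e₁ (Set.projIcc 0 s₀ hs₀0 (t:ℝ))).2
    · have := invHomeoAux_k k₁ hk₁cont hk₁bij (Set.projIcc 0 s₀ hs₀0 (t:ℝ))
      rw [hψ₁def]
      rw [this.trans (congrArg Subtype.val (Set.projIcc_of_mem hs₀0 hm))]
  have hψ₀spec : ∀ t : I01, s₀ ≤ (t:ℝ) →
      ((ψ₀ t : ℝ) ∈ Set.Icc (0:ℝ) t₀ ∧ k₀ ((ψ₀ t : ℝ)) = (t:ℝ)) := by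
    intro t ht
    have hm : (t:ℝ) ∈ Set.Icc s₀ (1:ℝ) := ⟨ht, t.2.2⟩
    constructor
    · exact (e₀ (Set.projIcc s₀ 1 hs₀1.le (t:ℝ))).2
    · have := invHomeoAux_k k₀ hk₀cont hk₀bij (Set.projIcc s₀ 1 hs₀1.le (t:ℝ))
      rw [hψ₀def]
      rw [this.trans (congrArg Subtype.val (Set.projIcc_of_mem hs₀1.le hm))]
  have hψ₁eq : ∀ (t : I01), (t:ℝ) ≤ s₀ → ∀ (x : ℝ) (hx : x ∈ Set.Icc t₀ 1),
      k₁ x = (t:ℝ) → ψ₁ t = ⟨x, hsub₁ hx⟩ := by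
    intro t ht x hx hk
    exact Subtype.ext (hk₁bij.injOn (hψ₁spec t ht).1 hx (by rw [(hψ₁spec t ht).2, hk]))
  have hψ₀eq : ∀ (t : I01), s₀ ≤ (t:ℝ) → ∀ (x : ℝ) (hx : x ∈ Set.Icc (0:ℝ) t₀),
      k₀ x = (t:ℝ) → ψ₀ t = ⟨x, hsub₀ hx⟩ := by
    intro t ht x hx hk
    exact Subtype.ext (hk₀bij.injOn (hψ₀spec t ht).1 hx (by rw [(hψ₀spec t ht).2, hk]))
  have hφ₀eq : ∀ (s : I01), (s:ℝ) ∈ Set.Icc (0:ℝ) t₀ → ∀ (p : k₀ (s:ℝ) ∈ I01),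
      φ₀ s = ⟨k₀ (s:ℝ), p⟩ := by
    intro s hs p
    exact Subtype.ext (congrArg k₀ (congrArg Subtype.val (Set.projIcc_of_mem ht₀pos.le hs)))
  have hφ₁eq : ∀ (s : I01), (s:ℝ) ∈ Set.Icc t₀ (1:ℝ) → ∀ (p : k₁ (s:ℝ) ∈ I01),
      φ₁ s = ⟨k₁ (s:ℝ), p⟩ := by
    intro s hs p
    exact Subtype.ext (congrArg k₁ (congrArg Subtype.val (Set.projIcc_of_mem ht₀le hs)))
  -- the underlying functions of α and β
  set Fα : C(I01, D) → I01 → D := fun a t =>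
    if (t:ℝ) ≤ s₀ then a (ψ₁ t) else γ (a (ψ₀ t)) with hFαdef
  set Fβ : C(I01, D) → I01 → D := fun b s =>
    if (s:ℝ) ≤ t₀ then γ.symm (b (φ₀ s)) else b (φ₁ s) with hFβdef
  have hψ₁c : Continuous ψ₁ := by
    rw [hψ₁def]
    exact Continuous.subtype_mk
      ((continuous_subtype_val.comp e₁.continuous).comp
        (continuous_projIcc.comp continuous_subtype_val)) _
  have hψ₀c : Continuous ψ₀ := by
    rw [hψ₀def]
    exact Continuous.subtype_mk
      ((continuous_subtype_val.comp e₀.continuous).comp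
        (continuous_projIcc.comp continuous_subtype_val)) _
  have hφ₀c : Continuous φ₀ := by
    rw [hφ₀def]
    exact Continuous.subtype_mk
      (hk₀cont.restrict.comp (continuous_projIcc.comp continuous_subtype_val)) _
  have hφ₁c : Continuous φ₁ := by
    rw [hφ₁def]
    exact Continuous.subtype_mk
      (hk₁cont.restrict.comp (continuous_projIcc.comp continuous_subtype_val)) _
  have hFαcont : ∀ a : C(I01, D), a ∈ mappingTorusSet γ → Continuous (Fα a) := by
    intro a ha
    rw [hFαdef]
    apply Continuous.if_le
    · exact a.continuous.comp hψ₁c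
    · exact hγc.comp (a.continuous.comp hψ₀c)
    · exact continuous_subtype_val
    · exact continuous_const
    · intro t ht
      have h1 : ψ₁ t = ⟨1, hsub₁ ⟨ht₀le, le_rfl⟩⟩ :=
        hψ₁eq t ht.le 1 ⟨ht₀le, le_rfl⟩ (by rw [hk₁1, ht])
      have h0 : ψ₀ t = ⟨0, hsub₀ ⟨le_rfl, ht₀pos.le⟩⟩ :=
        hψ₀eq t ht.ge 0 ⟨le_rfl, ht₀pos.le⟩ (by rw [hk₀0, ht])
      rw [h1, h0]
      exact ha
  have hFβcont : ∀ b : C(I01, D), b ∈ mappingTorusSet γ → Continuous (Fβ b) := by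
    intro b hb
    rw [hFβdef]
    apply Continuous.if_le
    · exact hγsc.comp (b.continuous.comp hφ₀c)
    · exact b.continuous.comp hφ₁c
    · exact continuous_subtype_val
    · exact continuous_const
    · intro s hst
      have hm0 : (s:ℝ) ∈ Set.Icc (0:ℝ) t₀ := ⟨s.2.1, hst.le⟩
      have hm1 : (s:ℝ) ∈ Set.Icc t₀ (1:ℝ) := ⟨hst.ge, s.2.2⟩
      rw [hφ₀eq s hm0 (hsubA (hk₀bij.mapsTo hm0)), hφ₁eq s hm1 (hsubB (hk₁bij.mapsTo hm1))]
      have e1 : (⟨k₀ (s:ℝ), hsubA (hk₀bij.mapsTo hm0)⟩ : I01) = ⟨1, one_mem_I01⟩ :=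
        Subtype.ext (by show k₀ (s:ℝ) = (1:ℝ); rw [hst, hk₀t₀])
      have e0 : (⟨k₁ (s:ℝ), hsubB (hk₁bij.mapsTo hm1)⟩ : I01) = ⟨0, zero_mem_I01⟩ :=
        Subtype.ext (by show k₁ (s:ℝ) = (0:ℝ); rw [hst, hk₁t₀])
      rw [e1, e0, hb, StarAlgEquiv.symm_apply_apply]
  -- α and β
  set α : C(I01, D) → C(I01, D) := fun a =>
    if ha : a ∈ mappingTorusSet γ then ContinuousMap.mk (Fα a) (hFαcont a ha) else a with hα
  set β : C(I01, D) → C(I01, D) := fun b =>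
    if hb : b ∈ mappingTorusSet γ then ContinuousMap.mk (Fβ b) (hFβcont b hb) else b with hβ
  have hαeq : ∀ a (ha : a ∈ mappingTorusSet γ),
      α a = ContinuousMap.mk (Fα a) (hFαcont a ha) := by
    intro a ha; rw [hα]; exact dif_pos ha
  have hβeq : ∀ b (hb : b ∈ mappingTorusSet γ),
      β b = ContinuousMap.mk (Fβ b) (hFβcont b hb) := by
    intro b hb; rw [hβ]; exact dif_pos hb
  -- key evaluation lemmas for Fα
  have hFα₁ : ∀ (a : C(I01, D)) (s : ℝ) (hs : s ∈ Set.Icc t₀ 1) (hks : k₁ s ∈ I01),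
      Fα a ⟨k₁ s, hks⟩ = a ⟨s, hsub₁ hs⟩ := by
    intro a s hs hks
    have hm : k₁ s ∈ Set.Icc (0:ℝ) s₀ := hk₁bij.mapsTo hs
    rw [hFαdef]
    simp only
    rw [if_pos hm.2, hψ₁eq ⟨k₁ s, hks⟩ hm.2 s hs rfl]
  have hFα₀ : ∀ (a : C(I01, D)), a ∈ mappingTorusSet γ →
      ∀ (s : ℝ) (hs : s ∈ Set.Icc (0:ℝ) t₀) (hks : k₀ s ∈ I01),
      Fα a ⟨k₀ s, hks⟩ = γ (a ⟨s, hsub₀ hs⟩) := by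
    intro a ha s hs hks
    have hm : k₀ s ∈ Set.Icc s₀ (1:ℝ) := hk₀bij.mapsTo hs
    rw [hFαdef]
    simp only
    by_cases hc : k₀ s ≤ s₀
    · -- then k₀ s = s₀ and s = 0
      have hks₀ : k₀ s = s₀ := le_antisymm hc hm.1
      have hs0 : s = 0 := by
        by_contra hne
        have h0t : (0:ℝ) ∈ Set.Icc (0:ℝ) t₀ := ⟨le_rfl, ht₀pos.le⟩
        have := hk₀mono h0t hs (lt_of_le_of_ne hs.1 (Ne.symm hne))
        rw [hk₀0, hks₀] at this
        exact lt_irrefl _ this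
      rw [if_pos hc]
      have h1 : ψ₁ ⟨k₀ s, hks⟩ = ⟨1, hsub₁ ⟨ht₀le, le_rfl⟩⟩ :=
        hψ₁eq _ hc 1 ⟨ht₀le, le_rfl⟩ (by show k₁ 1 = k₀ s; rw [hk₁1, hks₀])
      rw [h1, ha]
      subst hs0
      rfl
    · rw [if_neg hc, hψ₀eq ⟨k₀ s, hks⟩ hm.1 s hs rfl]
  -- α maps the mapping torus into itself
  have hαmem : ∀ a ∈ mappingTorusSet γ, α a ∈ mappingTorusSet γ := by
    intro a ha
    rw [hαeq a ha]
    simp only [mappingTorusSet, Set.mem_setOf_eq, ContinuousMap.coe_mk]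
    have hone : (⟨1, one_mem_I01⟩ : I01) = ⟨k₀ t₀, hsubA (hk₀bij.mapsTo ⟨ht₀pos.le, le_rfl⟩)⟩ :=
      Subtype.ext (by show (1:ℝ) = k₀ t₀; rw [hk₀t₀])
    have hzero : (⟨0, zero_mem_I01⟩ : I01) = ⟨k₁ t₀, hsubB (hk₁bij.mapsTo ⟨le_rfl, ht₀le⟩)⟩ :=
      Subtype.ext (by show (0:ℝ) = k₁ t₀; rw [hk₁t₀])
    rw [hone, hzero, hFα₀ a ha t₀ ⟨ht₀pos.le, le_rfl⟩ _, hFα₁ a t₀ ⟨le_rfl, ht₀le⟩ _]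
  -- β maps the mapping torus into itself
  have hFβ₀ : ∀ (b : C(I01, D)) (s : ℝ) (hs : s ∈ Set.Icc (0:ℝ) t₀) (hs' : s ∈ I01)
      (p : k₀ s ∈ I01), Fβ b ⟨s, hs'⟩ = γ.symm (b ⟨k₀ s, p⟩) := by
    intro b s hs hs' p
    rw [hFβdef]
    simp only
    rw [if_pos hs.2, hφ₀eq ⟨s, hs'⟩ hs p]
  have hFβ₁ : ∀ (b : C(I01, D)), b ∈ mappingTorusSet γ →
      ∀ (s : ℝ) (hs : s ∈ Set.Icc t₀ (1:ℝ)) (hs' : s ∈ I01) (p : k₁ s ∈ I01),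
      Fβ b ⟨s, hs'⟩ = b ⟨k₁ s, p⟩ := by
    intro b hb s hs hs' p
    rw [hFβdef]
    simp only
    by_cases hc : s ≤ t₀
    · have hst : s = t₀ := le_antisymm hc hs.1
      rw [if_pos hc, hφ₀eq ⟨s, hs'⟩ ⟨hs'.1, hc⟩ (hsubA (hk₀bij.mapsTo ⟨hs'.1, hc⟩))]
      have e1 : (⟨k₀ s, hsubA (hk₀bij.mapsTo ⟨hs'.1, hc⟩)⟩ : I01) = ⟨1, one_mem_I01⟩ :=
        Subtype.ext (by show k₀ s = (1:ℝ); rw [hst, hk₀t₀])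
      have e0 : (⟨k₁ s, p⟩ : I01) = ⟨0, zero_mem_I01⟩ :=
        Subtype.ext (by show k₁ s = (0:ℝ); rw [hst, hk₁t₀])
      rw [e1, e0, hb, StarAlgEquiv.symm_apply_apply]
    · rw [if_neg hc, hφ₁eq ⟨s, hs'⟩ ⟨le_of_not_ge hc, hs'.2⟩ p]
  have hβmem : ∀ b ∈ mappingTorusSet γ, β b ∈ mappingTorusSet γ := by
    intro b hb
    rw [hβeq b hb]
    simp only [mappingTorusSet, Set.mem_setOf_eq, ContinuousMap.coe_mk]
    rw [hFβ₁ b hb 1 ⟨ht₀le, le_rfl⟩ one_mem_I01 (hsubB (hk₁bij.mapsTo ⟨ht₀le, le_rfl⟩)),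
      hFβ₀ b 0 ⟨le_rfl, ht₀pos.le⟩ zero_mem_I01 (hsubA (hk₀bij.mapsTo ⟨le_rfl, ht₀pos.le⟩)),
      StarAlgEquiv.apply_symm_apply]
    exact congrArg b (Subtype.ext (by show k₁ 1 = k₀ 0; rw [hk₁1, hk₀0]))
  -- β ∘ α = id on the mapping torus
  have hleft : ∀ a ∈ mappingTorusSet γ, β (α a) = a := by
    intro a ha
    have hαa := hαmem a ha
    rw [hβeq _ hαa]
    ext s
    simp only [ContinuousMap.coe_mk]
    by_cases hst : (s:ℝ) ≤ t₀
    · have hm : (s:ℝ) ∈ Set.Icc (0:ℝ) t₀ := ⟨s.2.1, hst⟩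
      have hp : k₀ (s:ℝ) ∈ I01 := hsubA (hk₀bij.mapsTo hm)
      have : (s : I01) = ⟨(s:ℝ), s.2⟩ := Subtype.ext rfl
      rw [this, hFβ₀ (α a) (s:ℝ) hm s.2 hp, hαeq a ha]
      simp only [ContinuousMap.coe_mk]
      rw [hFα₀ a ha (s:ℝ) hm hp, StarAlgEquiv.symm_apply_apply]
    · have hm : (s:ℝ) ∈ Set.Icc t₀ (1:ℝ) := ⟨le_of_not_ge hst, s.2.2⟩
      have hp : k₁ (s:ℝ) ∈ I01 := hsubB (hk₁bij.mapsTo hm)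
      have : (s : I01) = ⟨(s:ℝ), s.2⟩ := Subtype.ext rfl
      rw [this, hFβ₁ (α a) hαa (s:ℝ) hm s.2 hp, hαeq a ha]
      simp only [ContinuousMap.coe_mk]
      rw [hFα₁ a (s:ℝ) hm hp]
  -- α ∘ β = id on the mapping torus
  have hright : ∀ b ∈ mappingTorusSet γ, α (β b) = b := by
    intro b hb
    have hβb := hβmem b hb
    rw [hαeq _ hβb]
    ext t
    simp only [ContinuousMap.coe_mk]
    rw [hFαdef]
    simp only
    by_cases hts : (t:ℝ) ≤ s₀
    · rw [if_pos hts]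
      obtain ⟨hx, hkx⟩ := hψ₁spec t hts
      have : ψ₁ t = ⟨(ψ₁ t : ℝ), (ψ₁ t).2⟩ := Subtype.ext rfl
      rw [this, hβeq b hb]
      simp only [ContinuousMap.coe_mk]
      rw [hFβ₁ b hb ((ψ₁ t : ℝ)) hx (ψ₁ t).2 (hsubB (hk₁bij.mapsTo hx))]
      exact congrArg b (Subtype.ext hkx)
    · rw [if_neg hts]
      obtain ⟨hx, hkx⟩ := hψ₀spec t (le_of_not_ge hts)
      have : ψ₀ t = ⟨(ψ₀ t : ℝ), (ψ₀ t).2⟩ := Subtype.ext rfl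
      rw [this, hβeq b hb]
      simp only [ContinuousMap.coe_mk]
      rw [hFβ₀ b ((ψ₀ t : ℝ)) hx (ψ₀ t).2 (hsubA (hk₀bij.mapsTo hx)),
        StarAlgEquiv.apply_symm_apply]
      exact congrArg b (Subtype.ext hkx)
  -- closure of the mapping torus under the operations
  have hadd : ∀ a ∈ mappingTorusSet γ, ∀ b ∈ mappingTorusSet γ,
      a + b ∈ mappingTorusSet γ := by
    intro a ha b hb
    simp only [mappingTorusSet, Set.mem_setOf_eq] at ha hb ⊢
    rw [ContinuousMap.add_apply, ContinuousMap.add_apply, ha, hb, map_add]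
  have hmul : ∀ a ∈ mappingTorusSet γ, ∀ b ∈ mappingTorusSet γ,
      a * b ∈ mappingTorusSet γ := by
    intro a ha b hb
    simp only [mappingTorusSet, Set.mem_setOf_eq] at ha hb ⊢
    rw [ContinuousMap.mul_apply, ContinuousMap.mul_apply, ha, hb, map_mul]
  have hstar : ∀ a ∈ mappingTorusSet γ, star a ∈ mappingTorusSet γ := by
    intro a ha
    simp only [mappingTorusSet, Set.mem_setOf_eq] at ha ⊢
    rw [ContinuousMap.star_apply, ContinuousMap.star_apply, ha, map_star]
  have hsmul : ∀ (c : ℂ), ∀ a ∈ mappingTorusSet γ, c • a ∈ mappingTorusSet γ := by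
    intro c a ha
    simp only [mappingTorusSet, Set.mem_setOf_eq] at ha ⊢
    rw [ContinuousMap.smul_apply, ContinuousMap.smul_apply, ha, map_smul]
  refine ⟨α, hαmem, ?_, ?_, ?_, ?_, ?_, ?_, ?_⟩
  · -- property on [0, s₀]
    intro a ha s hs hks hs'
    rw [hαeq a ha]
    simp only [ContinuousMap.coe_mk]
    exact hFα₁ a s hs hks
  · -- property on [s₀, 1]
    intro a ha s hs hks hs'
    rw [hαeq a ha]
    simp only [ContinuousMap.coe_mk]
    exact hFα₀ a ha s hs hks
  · -- bijectivity
    exact Set.InvOn.bijOn ⟨hleft, hright⟩ hαmem hβmem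
  · -- additivity and multiplicativity
    intro a ha b hb
    constructor
    · rw [hαeq _ (hadd a ha b hb), hαeq a ha, hαeq b hb]
      ext t
      simp only [ContinuousMap.add_apply, ContinuousMap.coe_mk]
      rw [hFαdef]
      simp only
      split_ifs with hc <;> simp [map_add]
    · rw [hαeq _ (hmul a ha b hb), hαeq a ha, hαeq b hb]
      ext t
      simp only [ContinuousMap.mul_apply, ContinuousMap.coe_mk]
      rw [hFαdef]
      simp only
      split_ifs with hc <;> simp [map_mul]
  · -- star
    intro a ha
    rw [hαeq _ (hstar a ha), hαeq a ha]
    ext t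
    simp only [ContinuousMap.star_apply, ContinuousMap.coe_mk]
    rw [hFαdef]
    simp only
    split_ifs with hc <;> simp [map_star]
  · -- smul
    intro c a ha
    rw [hαeq _ (hsmul c a ha), hαeq a ha]
    ext t
    simp only [ContinuousMap.smul_apply, ContinuousMap.coe_mk]
    rw [hFαdef]
    simp only
    split_ifs with hc <;> simp [map_smul]
  · -- the automorphism lies over h
    intro f a ha
    have hexp2pi : Circle.exp (2 * π * (1:ℝ)) = Circle.exp (2 * π * (0:ℝ)) := by
      rw [mul_one, mul_zero, Circle.exp_two_pi, Circle.exp_zero]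
    have hηmem : etaSmul f a ∈ mappingTorusSet γ := by
      have ha' : a ⟨1, one_mem_I01⟩ = γ (a ⟨0, zero_mem_I01⟩) := ha
      show etaSmul f a ⟨1, one_mem_I01⟩ = γ (etaSmul f a ⟨0, zero_mem_I01⟩)
      simp only [etaSmul, ContinuousMap.smul_apply', ContinuousMap.comp_apply]
      have hsc : expI01 ⟨1, one_mem_I01⟩ = expI01 ⟨0, zero_mem_I01⟩ := hexp2pi
      rw [ha', map_smul, hsc]
    rw [hαeq _ hηmem, hαeq a ha]
    ext t
    simp only [ContinuousMap.coe_mk]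
    have hrhs : etaSmul (f.comp (h.symm : C(Circle, Circle)))
        (ContinuousMap.mk (Fα a) (hFαcont a ha)) t
        = f (h.symm (Circle.exp (2 * π * (t:ℝ)))) • Fα a t := rfl
    rw [hrhs, hFαdef]
    simp only
    by_cases hts : (t:ℝ) ≤ s₀
    · rw [if_pos hts]
      obtain ⟨hx, hkx⟩ := hψ₁spec t hts
      have hscal : h.symm (Circle.exp (2 * π * (t:ℝ))) = Circle.exp (2 * π * ((ψ₁ t : ℝ))) := by
        calc h.symm (Circle.exp (2 * π * (t:ℝ)))
            = h.symm (Circle.exp (2 * π * k₁ ((ψ₁ t : ℝ)))) := by rw [hkx]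
          _ = h.symm (h (Circle.exp (2 * π * ((ψ₁ t : ℝ))))) := by rw [hlift₁ _ hx]
          _ = Circle.exp (2 * π * ((ψ₁ t : ℝ))) := h.symm_apply_apply _
      have hlhs : etaSmul f a (ψ₁ t) = f (Circle.exp (2 * π * ((ψ₁ t : ℝ)))) • a (ψ₁ t) := rfl
      rw [hlhs, hscal, if_pos hts]
    · rw [if_neg hts]
      obtain ⟨hx, hkx⟩ := hψ₀spec t (le_of_not_ge hts)
      have hscal : h.symm (Circle.exp (2 * π * (t:ℝ))) = Circle.exp (2 * π * ((ψ₀ t : ℝ))) := by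
        calc h.symm (Circle.exp (2 * π * (t:ℝ)))
            = h.symm (Circle.exp (2 * π * k₀ ((ψ₀ t : ℝ)))) := by rw [hkx]
          _ = h.symm (h (Circle.exp (2 * π * ((ψ₀ t : ℝ))))) := by rw [hlift₀ _ hx]
          _ = Circle.exp (2 * π * ((ψ₀ t : ℝ))) := h.symm_apply_apply _
      have hlhs : etaSmul f a (ψ₀ t) = f (Circle.exp (2 * π * ((ψ₀ t : ℝ)))) • a (ψ₀ t) := rfl
      rw [hlhs, map_smul, hscal, if_neg hts]
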